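/- Let γ > 1, a ∈ ℝ, r₀ > 0 with Δ(r₀) > 0 where Δ(r) = r² − 2r + a². Let B, f, u, c : ℝ → ℝ be differentiable at r₀ with B(r₀) > 0, f(r₀) > 0, 0 < u(r₀) < 1, 0 < c(r₀) and c(r₀)² < γ − 1. Define E(r) = ((γ−1)/(γ−1−c(r)²))·√(Δ(r)/(B(r)(1−u(r)²))) and Ξ(r) = √(Δ(r))·c(r)^{2/(γ−1)}·(u(r)/√(1−u(r)²))·((γ−1)/(γ−1−c(r)²))^{1/(γ−1)}·c(r)·√((γ−1)/(γ(γ−1−c(r)²)))·f(r). If E′(r₀) = 0 and Ξ′(r₀) = 0, then at r = r₀: (u² − 2c²/(γ+1))·u′ = u(1−u²)·[ (2c²/(γ+1))·(Δ′/(2Δ) + f′/f) + (1/2)·(B′/B − Δ′/Δ) ], where Δ′ = 2r − 2. -/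

import Mathlib

set_option maxHeartbeats 1000000 in
theorem nt_alg (g d b F U C Dp bp Fp Up Cp : ℝ) (hd : d ≠ 0) (hb : b ≠ 0) (hF : F ≠ 0)
    (hU : U ≠ 0) (hC : C ≠ 0) (hw : 1 - U^2 ≠ 0) (hk : g - 1 - C^2 ≠ 0)
    (hm : g - 1 ≠ 0) (hg1 : g + 1 ≠ 0)
    (hA : 2*C*Cp/(g-1-C^2) + (1/2)*(Dp/d - bp/b) + U*Up/(1-U^2) = 0)
    (hB : Dp/(2*d) + (2/(g-1))*(Cp/C) + Up/U + U*Up/(1-U^2)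
      + (1/(g-1))*(2*C*Cp/(g-1-C^2)) + Cp/C + C*Cp/(g-1-C^2) + Fp/F = 0) :
    (U^2 - 2*C^2/(g+1))*Up
      = U*(1-U^2)*((2*C^2/(g+1))*(Dp/(2*d) + Fp/F) + (1/2)*(bp/b - Dp/d)) := by
  have hPA : 4*C*Cp*d*b*(1-U^2) + Dp*b*(1-U^2)*(g-1-C^2) - bp*d*(1-U^2)*(g-1-C^2)
      + 2*U*Up*d*b*(g-1-C^2) = 0 := by
    have e : 4*C*Cp*d*b*(1-U^2) + Dp*b*(1-U^2)*(g-1-C^2) - bp*d*(1-U^2)*(g-1-C^2)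
        + 2*U*Up*d*b*(g-1-C^2)
        = (2*C*Cp/(g-1-C^2) + (1/2)*(Dp/d - bp/b) + U*Up/(1-U^2))
          * (2*d*b*(1-U^2)*(g-1-C^2)) := by
      field_simp
      ring
    rw [e, hA, zero_mul]
  have hPB : Dp*(g-1)*C*U*(1-U^2)*(g-1-C^2)*F + 4*Cp*d*U*(1-U^2)*(g-1-C^2)*F
      + 2*Up*d*(g-1)*C*(1-U^2)*(g-1-C^2)*F + 2*U^2*Up*d*(g-1)*C*(g-1-C^2)*F
      + 4*C^2*Cp*d*U*(1-U^2)*F + 2*Cp*d*(g-1)*U*(1-U^2)*(g-1-C^2)*F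
      + 2*C^2*Cp*d*(g-1)*U*(1-U^2)*F + 2*Fp*d*(g-1)*C*U*(1-U^2)*(g-1-C^2) = 0 := by
    have e : Dp*(g-1)*C*U*(1-U^2)*(g-1-C^2)*F + 4*Cp*d*U*(1-U^2)*(g-1-C^2)*F
        + 2*Up*d*(g-1)*C*(1-U^2)*(g-1-C^2)*F + 2*U^2*Up*d*(g-1)*C*(g-1-C^2)*F
        + 4*C^2*Cp*d*U*(1-U^2)*F + 2*Cp*d*(g-1)*U*(1-U^2)*(g-1-C^2)*F
        + 2*C^2*Cp*d*(g-1)*U*(1-U^2)*F + 2*Fp*d*(g-1)*C*U*(1-U^2)*(g-1-C^2)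
        = (Dp/(2*d) + (2/(g-1))*(Cp/C) + Up/U + U*Up/(1-U^2)
          + (1/(g-1))*(2*C*Cp/(g-1-C^2)) + Cp/C + C*Cp/(g-1-C^2) + Fp/F)
          * (2*d*(g-1)*C*U*(1-U^2)*(g-1-C^2)*F) := by
      field_simp
      ring
    rw [e, hB, zero_mul]
  have key : ((U^2 - 2*C^2/(g+1))*Up
      - U*(1-U^2)*((2*C^2/(g+1))*(Dp/(2*d) + Fp/F) + (1/2)*(bp/b - Dp/d)))
      * (2*d*(g+1)*b*F*(g-1-C^2)*(g-1)*C) = 0 := by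
    have e : ((U^2 - 2*C^2/(g+1))*Up
        - U*(1-U^2)*((2*C^2/(g+1))*(Dp/(2*d) + Fp/F) + (1/2)*(bp/b - Dp/d)))
        * (2*d*(g+1)*b*F*(g-1-C^2)*(g-1)*C)
        = ((g+1)*F*(g-1)*C*U) *
            (4*C*Cp*d*b*(1-U^2) + Dp*b*(1-U^2)*(g-1-C^2) - bp*d*(1-U^2)*(g-1-C^2)
              + 2*U*Up*d*b*(g-1-C^2))
          - (2*b*C^2) *
            (Dp*(g-1)*C*U*(1-U^2)*(g-1-C^2)*F + 4*Cp*d*U*(1-U^2)*(g-1-C^2)*F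
              + 2*Up*d*(g-1)*C*(1-U^2)*(g-1-C^2)*F + 2*U^2*Up*d*(g-1)*C*(g-1-C^2)*F
              + 4*C^2*Cp*d*U*(1-U^2)*F + 2*Cp*d*(g-1)*U*(1-U^2)*(g-1-C^2)*F
              + 2*C^2*Cp*d*(g-1)*U*(1-U^2)*F + 2*Fp*d*(g-1)*C*U*(1-U^2)*(g-1-C^2)) := by
      field_simp
      ring
    rw [e, hPA, hPB, mul_zero, mul_zero, sub_zero]
  have hM : 2*d*(g+1)*b*F*(g-1-C^2)*(g-1)*C ≠ 0 := by
    simp only [ne_eq, mul_eq_zero, not_or]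
    norm_num
    tauto
  have hz := (mul_eq_zero.mp key).resolve_right hM
  linarith [hz]


set_option maxHeartbeats 1000000 in
theorem novikov_thorne_adiabatic_velocity_gradient (γ a r₀ : ℝ) (hγ : 1 < γ) (hr : 0 < r₀)
    (Δ : ℝ → ℝ) (hΔdef : Δ = fun r => r ^ 2 - 2 * r + a ^ 2) (hΔpos : 0 < Δ r₀)
    (B f u c : ℝ → ℝ)
    (hB : DifferentiableAt ℝ B r₀) (hf : DifferentiableAt ℝ f r₀)
    (hu : DifferentiableAt ℝ u r₀) (hc : DifferentiableAt ℝ c r₀)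
    (hB0 : 0 < B r₀) (hf0 : 0 < f r₀) (hu0 : 0 < u r₀) (hu1 : u r₀ < 1)
    (hc0 : 0 < c r₀) (hc1 : (c r₀) ^ 2 < γ - 1)
    (E Ξ : ℝ → ℝ)
    (hE : E = fun r => ((γ - 1) / (γ - 1 - (c r) ^ 2)) *
      Real.sqrt (Δ r / (B r * (1 - (u r) ^ 2))))
    (hΞ : Ξ = fun r => Real.sqrt (Δ r) * (c r) ^ (2 / (γ - 1)) *
      (u r / Real.sqrt (1 - (u r) ^ 2)) *
      ((γ - 1) / (γ - 1 - (c r) ^ 2)) ^ (1 / (γ - 1)) *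
      (c r * Real.sqrt ((γ - 1) / (γ * (γ - 1 - (c r) ^ 2)))) * f r)
    (hE' : deriv E r₀ = 0) (hΞ' : deriv Ξ r₀ = 0) :
    ((u r₀) ^ 2 - 2 * (c r₀) ^ 2 / (γ + 1)) * deriv u r₀ =
      u r₀ * (1 - (u r₀) ^ 2) *
        ((2 * (c r₀) ^ 2 / (γ + 1)) *
            ((2 * r₀ - 2) / (2 * Δ r₀) + deriv f r₀ / f r₀) +
          (1 / 2) * (deriv B r₀ / B r₀ - (2 * r₀ - 2) / Δ r₀)) := by
  have hm : (0:ℝ) < γ - 1 := by linarith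
  have hγ0 : (0:ℝ) < γ := by linarith
  have hγ1 : (0:ℝ) < γ + 1 := by linarith
  have hk : 0 < γ - 1 - c r₀ ^ 2 := by linarith
  have hw : 0 < 1 - u r₀ ^ 2 := by nlinarith
  -- derivative of Δ
  have hΔd : HasDerivAt Δ (2 * r₀ - 2) r₀ := by
    rw [hΔdef]
    have h1 : HasDerivAt (fun r : ℝ => r ^ 2 - 2 * r + a ^ 2)
        ((2:ℕ) * r₀ ^ (2-1) - 2 * 1 + 0) r₀ :=
      ((hasDerivAt_pow 2 r₀).sub ((hasDerivAt_id r₀).const_mul 2)).add (hasDerivAt_const _ _)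
    convert h1 using 1
    push_cast; ring
  -- eventual positivity
  have evΔ : ∀ᶠ r in nhds r₀, 0 < Δ r :=
    (hΔd.differentiableAt.continuousAt.tendsto).eventually (eventually_gt_nhds hΔpos)
  have evB : ∀ᶠ r in nhds r₀, 0 < B r :=
    (hB.continuousAt.tendsto).eventually (eventually_gt_nhds hB0)
  have evf : ∀ᶠ r in nhds r₀, 0 < f r :=
    (hf.continuousAt.tendsto).eventually (eventually_gt_nhds hf0)
  have evu0 : ∀ᶠ r in nhds r₀, 0 < u r :=
    (hu.continuousAt.tendsto).eventually (eventually_gt_nhds hu0)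
  have evu1 : ∀ᶠ r in nhds r₀, u r < 1 :=
    (hu.continuousAt.tendsto).eventually (eventually_lt_nhds hu1)
  have evc0 : ∀ᶠ r in nhds r₀, 0 < c r :=
    (hc.continuousAt.tendsto).eventually (eventually_gt_nhds hc0)
  have evk : ∀ᶠ r in nhds r₀, 0 < γ - 1 - c r ^ 2 := by
    have hcont : ContinuousAt (fun r => γ - 1 - c r ^ 2) r₀ :=
      (continuousAt_const.sub ((hc.continuousAt).pow 2))
    exact (hcont.tendsto).eventually (eventually_gt_nhds hk)
  -- log-derivative building blocks
  have hcsq : HasDerivAt (fun r => γ - 1 - c r ^ 2) (-(2 * c r₀ * deriv c r₀)) r₀ := by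
    have h1 := (hc.hasDerivAt.pow 2).const_sub (γ - 1)
    refine h1.congr_deriv ?_; push_cast; ring
  have hlogk : HasDerivAt (fun r => Real.log (γ - 1 - c r ^ 2))
      (-(2 * c r₀ * deriv c r₀) / (γ - 1 - c r₀ ^ 2)) r₀ := by
    have h1 := (Real.hasDerivAt_log hk.ne').comp r₀ hcsq
    refine h1.congr_deriv ?_; ring
  have hlogΔ : HasDerivAt (fun r => Real.log (Δ r)) ((2 * r₀ - 2) / Δ r₀) r₀ := by
    have h1 := (Real.hasDerivAt_log hΔpos.ne').comp r₀ hΔd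
    refine h1.congr_deriv ?_; ring
  have hlogB : HasDerivAt (fun r => Real.log (B r)) (deriv B r₀ / B r₀) r₀ := by
    have h1 := (Real.hasDerivAt_log hB0.ne').comp r₀ hB.hasDerivAt
    refine h1.congr_deriv ?_; ring
  have hlogf : HasDerivAt (fun r => Real.log (f r)) (deriv f r₀ / f r₀) r₀ := by
    have h1 := (Real.hasDerivAt_log hf0.ne').comp r₀ hf.hasDerivAt
    refine h1.congr_deriv ?_; ring
  have hlogu : HasDerivAt (fun r => Real.log (u r)) (deriv u r₀ / u r₀) r₀ := by
    have h1 := (Real.hasDerivAt_log hu0.ne').comp r₀ hu.hasDerivAt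
    refine h1.congr_deriv ?_; ring
  have hlogc : HasDerivAt (fun r => Real.log (c r)) (deriv c r₀ / c r₀) r₀ := by
    have h1 := (Real.hasDerivAt_log hc0.ne').comp r₀ hc.hasDerivAt
    refine h1.congr_deriv ?_; ring
  have husq : HasDerivAt (fun r => 1 - u r ^ 2) (-(2 * u r₀ * deriv u r₀)) r₀ := by
    have h1 := (hu.hasDerivAt.pow 2).const_sub 1
    refine h1.congr_deriv ?_; push_cast; ring
  have hlogw : HasDerivAt (fun r => Real.log (1 - u r ^ 2))
      (-(2 * u r₀ * deriv u r₀) / (1 - u r₀ ^ 2)) r₀ := by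
    have h1 := (Real.hasDerivAt_log hw.ne').comp r₀ husq
    refine h1.congr_deriv ?_; ring
  ----------------------------------------------------------------
  -- E side
  ----------------------------------------------------------------
  have hE0 : 0 < E r₀ := by
    rw [hE]
    exact mul_pos (div_pos hm hk)
      (Real.sqrt_pos.mpr (div_pos hΔpos (mul_pos hB0 hw)))
  have hEdiff : DifferentiableAt ℝ E r₀ := by
    rw [hE]
    have h1 : DifferentiableAt ℝ (fun r => (γ - 1) / (γ - 1 - c r ^ 2)) r₀ :=
      (differentiableAt_const _).div hcsq.differentiableAt hk.ne'
    have h2 : DifferentiableAt ℝ (fun r => Δ r / (B r * (1 - u r ^ 2))) r₀ :=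
      hΔd.differentiableAt.div (hB.mul husq.differentiableAt) (mul_pos hB0 hw).ne'
    exact h1.mul (h2.sqrt (div_pos hΔpos (mul_pos hB0 hw)).ne')
  have hlogE0 : deriv (fun r => Real.log (E r)) r₀ = 0 := by
    have h1 := (Real.hasDerivAt_log hE0.ne').comp r₀ hEdiff.hasDerivAt
    have h2 : deriv (fun r => Real.log (E r)) r₀ = (E r₀)⁻¹ * deriv E r₀ := h1.deriv
    rw [h2, hE', mul_zero]
  have heqE : (fun r => Real.log (E r)) =ᶠ[nhds r₀]
      (fun r => Real.log (γ - 1) - Real.log (γ - 1 - c r ^ 2)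
        + (1/2) * Real.log (Δ r) - (1/2) * Real.log (B r)
        - (1/2) * Real.log (1 - u r ^ 2)) := by
    filter_upwards [evΔ, evB, evu0, evu1, evk] with r h1 h2 h3 h4 h5
    have hwr : 0 < 1 - u r ^ 2 := by nlinarith
    have hsq : 0 < Δ r / (B r * (1 - u r ^ 2)) := div_pos h1 (mul_pos h2 hwr)
    rw [hE]
    simp only
    rw [Real.log_mul (div_ne_zero hm.ne' h5.ne') (Real.sqrt_pos.mpr hsq).ne',
      Real.log_div hm.ne' h5.ne', Real.log_sqrt hsq.le,
      Real.log_div h1.ne' (mul_pos h2 hwr).ne', Real.log_mul h2.ne' hwr.ne']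
    ring
  have hFd : HasDerivAt (fun r => Real.log (γ - 1) - Real.log (γ - 1 - c r ^ 2)
        + (1/2) * Real.log (Δ r) - (1/2) * Real.log (B r)
        - (1/2) * Real.log (1 - u r ^ 2))
      (2 * c r₀ * deriv c r₀ / (γ - 1 - c r₀ ^ 2)
        + (1/2) * ((2 * r₀ - 2) / Δ r₀ - deriv B r₀ / B r₀)
        + u r₀ * deriv u r₀ / (1 - u r₀ ^ 2)) r₀ := by
    have h1 := ((((hasDerivAt_const r₀ (Real.log (γ - 1))).sub hlogk).add
        (hlogΔ.const_mul ((1:ℝ)/2))).sub (hlogB.const_mul ((1:ℝ)/2))).sub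
        (hlogw.const_mul ((1:ℝ)/2))
    refine h1.congr_deriv ?_
    ring
  have hA : 2 * c r₀ * deriv c r₀ / (γ - 1 - c r₀ ^ 2)
      + (1/2) * ((2 * r₀ - 2) / Δ r₀ - deriv B r₀ / B r₀)
      + u r₀ * deriv u r₀ / (1 - u r₀ ^ 2) = 0 := by
    rw [← hFd.deriv, ← heqE.deriv_eq]
    exact hlogE0
  ----------------------------------------------------------------
  -- Ξ side
  ----------------------------------------------------------------
  have hΞ0 : 0 < Ξ r₀ := by
    rw [hΞ]
    have p1 : 0 < Real.sqrt (Δ r₀) := Real.sqrt_pos.mpr hΔpos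
    have p2 : (0:ℝ) < c r₀ ^ (2 / (γ - 1)) := Real.rpow_pos_of_pos hc0 _
    have p3 : 0 < u r₀ / Real.sqrt (1 - u r₀ ^ 2) :=
      div_pos hu0 (Real.sqrt_pos.mpr hw)
    have p4 : (0:ℝ) < ((γ - 1) / (γ - 1 - c r₀ ^ 2)) ^ (1 / (γ - 1)) :=
      Real.rpow_pos_of_pos (div_pos hm hk) _
    have p5 : 0 < c r₀ * Real.sqrt ((γ - 1) / (γ * (γ - 1 - c r₀ ^ 2))) :=
      mul_pos hc0 (Real.sqrt_pos.mpr (div_pos hm (mul_pos hγ0 hk)))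
    exact mul_pos (mul_pos (mul_pos (mul_pos (mul_pos p1 p2) p3) p4) p5) hf0
  have hΞdiff : DifferentiableAt ℝ Ξ r₀ := by
    rw [hΞ]
    have d1 : DifferentiableAt ℝ (fun r => Real.sqrt (Δ r)) r₀ :=
      hΔd.differentiableAt.sqrt hΔpos.ne'
    have d2 : DifferentiableAt ℝ (fun r => c r ^ (2 / (γ - 1))) r₀ :=
      hc.rpow_const (Or.inl hc0.ne')
    have d3 : DifferentiableAt ℝ (fun r => u r / Real.sqrt (1 - u r ^ 2)) r₀ :=
      hu.div (husq.differentiableAt.sqrt hw.ne') (Real.sqrt_pos.mpr hw).ne'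
    have d4 : DifferentiableAt ℝ
        (fun r => ((γ - 1) / (γ - 1 - c r ^ 2)) ^ (1 / (γ - 1))) r₀ :=
      (((differentiableAt_const _).div hcsq.differentiableAt hk.ne').rpow_const
        (Or.inl (div_pos hm hk).ne'))
    have d5 : DifferentiableAt ℝ
        (fun r => c r * Real.sqrt ((γ - 1) / (γ * (γ - 1 - c r ^ 2)))) r₀ :=
      hc.mul (((differentiableAt_const _).div
        ((differentiableAt_const γ).mul hcsq.differentiableAt)
        (mul_pos hγ0 hk).ne').sqrt (div_pos hm (mul_pos hγ0 hk)).ne')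
    exact ((((d1.mul d2).mul d3).mul d4).mul d5).mul hf
  have hlogΞ0 : deriv (fun r => Real.log (Ξ r)) r₀ = 0 := by
    have h1 := (Real.hasDerivAt_log hΞ0.ne').comp r₀ hΞdiff.hasDerivAt
    have h2 : deriv (fun r => Real.log (Ξ r)) r₀ = (Ξ r₀)⁻¹ * deriv Ξ r₀ := h1.deriv
    rw [h2, hΞ', mul_zero]
  have heqΞ : (fun r => Real.log (Ξ r)) =ᶠ[nhds r₀]
      (fun r => (1/2) * Real.log (Δ r) + (2/(γ-1)) * Real.log (c r)
        + Real.log (u r) - (1/2) * Real.log (1 - u r ^ 2)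
        + (1/(γ-1)) * (Real.log (γ-1) - Real.log (γ - 1 - c r ^ 2))
        + Real.log (c r)
        + (1/2) * (Real.log (γ-1) - Real.log γ - Real.log (γ - 1 - c r ^ 2))
        + Real.log (f r)) := by
    filter_upwards [evΔ, evB, evu0, evu1, evk, evc0, evf] with r h1 h2 h3 h4 h5 h6 h7
    have hwr : 0 < 1 - u r ^ 2 := by nlinarith
    have p1 : 0 < Real.sqrt (Δ r) := Real.sqrt_pos.mpr h1
    have p2 : (0:ℝ) < c r ^ (2 / (γ - 1)) := Real.rpow_pos_of_pos h6 _
    have p3 : 0 < u r / Real.sqrt (1 - u r ^ 2) := div_pos h3 (Real.sqrt_pos.mpr hwr)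
    have p4 : (0:ℝ) < ((γ - 1) / (γ - 1 - c r ^ 2)) ^ (1 / (γ - 1)) :=
      Real.rpow_pos_of_pos (div_pos hm h5) _
    have p6 : 0 < Real.sqrt ((γ - 1) / (γ * (γ - 1 - c r ^ 2))) :=
      Real.sqrt_pos.mpr (div_pos hm (mul_pos hγ0 h5))
    have p5 : 0 < c r * Real.sqrt ((γ - 1) / (γ * (γ - 1 - c r ^ 2))) := mul_pos h6 p6
    rw [hΞ]
    simp only
    rw [Real.log_mul (mul_pos (mul_pos (mul_pos (mul_pos p1 p2) p3) p4) p5).ne' h7.ne',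
      Real.log_mul (mul_pos (mul_pos (mul_pos p1 p2) p3) p4).ne' p5.ne',
      Real.log_mul (mul_pos (mul_pos p1 p2) p3).ne' p4.ne',
      Real.log_mul (mul_pos p1 p2).ne' p3.ne',
      Real.log_mul p1.ne' p2.ne',
      Real.log_sqrt h1.le,
      Real.log_rpow h6,
      Real.log_div h3.ne' (Real.sqrt_pos.mpr hwr).ne',
      Real.log_sqrt hwr.le,
      Real.log_rpow (div_pos hm h5),
      Real.log_div hm.ne' h5.ne',
      Real.log_mul h6.ne' p6.ne',
      Real.log_sqrt (div_pos hm (mul_pos hγ0 h5)).le,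
      Real.log_div hm.ne' (mul_pos hγ0 h5).ne',
      Real.log_mul hγ0.ne' h5.ne']
    ring
  have hGd : HasDerivAt (fun r => (1/2) * Real.log (Δ r) + (2/(γ-1)) * Real.log (c r)
        + Real.log (u r) - (1/2) * Real.log (1 - u r ^ 2)
        + (1/(γ-1)) * (Real.log (γ-1) - Real.log (γ - 1 - c r ^ 2))
        + Real.log (c r)
        + (1/2) * (Real.log (γ-1) - Real.log γ - Real.log (γ - 1 - c r ^ 2))
        + Real.log (f r))
      ((2 * r₀ - 2) / (2 * Δ r₀) + (2/(γ-1)) * (deriv c r₀ / c r₀)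
        + deriv u r₀ / u r₀ + u r₀ * deriv u r₀ / (1 - u r₀ ^ 2)
        + (1/(γ-1)) * (2 * c r₀ * deriv c r₀ / (γ - 1 - c r₀ ^ 2))
        + deriv c r₀ / c r₀
        + c r₀ * deriv c r₀ / (γ - 1 - c r₀ ^ 2)
        + deriv f r₀ / f r₀) r₀ := by
    have t1 := hlogΔ.const_mul ((1:ℝ)/2)
    have t2 := hlogc.const_mul ((2:ℝ)/(γ-1))
    have t4 := hlogw.const_mul ((1:ℝ)/2)
    have t5 := ((hasDerivAt_const r₀ (Real.log (γ-1))).sub hlogk).const_mul ((1:ℝ)/(γ-1))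
    have t7 := (((hasDerivAt_const r₀ (Real.log (γ-1))).sub
        (hasDerivAt_const r₀ (Real.log γ))).sub hlogk).const_mul ((1:ℝ)/2)
    have h1 := ((((((t1.add t2).add hlogu).sub t4).add t5).add hlogc).add t7).add hlogf
    refine h1.congr_deriv ?_
    ring
  have hB2 : (2 * r₀ - 2) / (2 * Δ r₀) + (2/(γ-1)) * (deriv c r₀ / c r₀)
      + deriv u r₀ / u r₀ + u r₀ * deriv u r₀ / (1 - u r₀ ^ 2)
      + (1/(γ-1)) * (2 * c r₀ * deriv c r₀ / (γ - 1 - c r₀ ^ 2))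
      + deriv c r₀ / c r₀
      + c r₀ * deriv c r₀ / (γ - 1 - c r₀ ^ 2)
      + deriv f r₀ / f r₀ = 0 := by
    rw [← hGd.deriv, ← heqΞ.deriv_eq]
    exact hlogΞ0
  exact nt_alg γ (Δ r₀) (B r₀) (f r₀) (u r₀) (c r₀) (2*r₀-2) (deriv B r₀)
    (deriv f r₀) (deriv u r₀) (deriv c r₀) hΔpos.ne' hB0.ne' hf0.ne' hu0.ne' hc0.ne'
    hw.ne' hk.ne' hm.ne' hγ1.ne' hA hB2
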